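/- Let S be a Markov semigroup and let T be a finite semigroup. Then the direct product S × T is a Markov semigroup if and only if S × T is finitely generated as a semigroup. -/

import Mathlib

open Function

/-- A language is regular if it is accepted by a deterministic finite automaton
with a finite state set. -/
def RegularLang {A : Type} (L : Language A) : Prop :=
  ∃ (Q : Type) (_ : Fintype Q) (M : DFA A Q), M.accepts = L

/-- The product of a nonempty word under the letter-assignment `φ`; the empty
word is sent to `none`. This is the induced map `φ⁺` on nonempty words. -/
def prodPlus {A S : Type} [Semigroup S] (φ : A → S) : List A → Option S
  | [] => none
  | a :: w => some (w.foldl (fun s b => s * φ b) (φ a))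

/-- The induced monoid homomorphism `φ*` from the free monoid of words. -/
def monProd {A M : Type} [Monoid M] (φ : A → M) (w : List A) : M :=
  (w.map φ).prod

/-- A semigroup Markov language for `S` over `A` (with respect to `φ`): a regular,
`+`-prefix-closed language of nonempty words mapping bijectively onto `S` under `φ⁺`. -/
structure IsSgMarkovLang {A S : Type} [Semigroup S] (φ : A → S) (L : Language A) : Prop where
  regular : RegularLang L
  not_empty_mem : [] ∉ L
  plus_prefix_closed : ∀ u v : List A, u ≠ [] → v ≠ [] → u ++ v ∈ L → u ∈ L
  unique_rep : ∀ s : S, ∃! w : List A, w ∈ L ∧ prodPlus φ w = some s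

/-- A robust semigroup Markov language: additionally every word of `L` has minimal
length among (nonempty) words representing the same element. -/
structure IsRobustSgMarkovLang {A S : Type} [Semigroup S] (φ : A → S) (L : Language A)
    extends IsSgMarkovLang φ L : Prop where
  min_length : ∀ w ∈ L, ∀ v : List A, prodPlus φ v = prodPlus φ w → w.length ≤ v.length

/-- A monoid Markov language for `M` over `A` (with respect to `φ`): a regular,
prefix-closed language mapping bijectively onto `M` under `φ*`. -/
structure IsMonMarkovLang {A M : Type} [Monoid M] (φ : A → M) (L : Language A) : Prop where
  regular : RegularLang L
  prefix_closed : ∀ u v : List A, u ++ v ∈ L → u ∈ L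
  unique_rep : ∀ m : M, ∃! w : List A, w ∈ L ∧ monProd φ w = m

/-- A robust monoid Markov language: additionally every word of `L` has minimal
length among words representing the same element. -/
structure IsRobustMonMarkovLang {A M : Type} [Monoid M] (φ : A → M) (L : Language A)
    extends IsMonMarkovLang φ L : Prop where
  min_length : ∀ w ∈ L, ∀ v : List A, monProd φ v = monProd φ w → w.length ≤ v.length

/-- `S` is Markov as a semigroup. -/
def SgMarkov (S : Type) [Semigroup S] : Prop :=
  ∃ (A : Type) (_ : Fintype A) (φ : A → S),
    (∀ s : S, ∃ w : List A, prodPlus φ w = some s) ∧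
    ∃ L : Language A, IsSgMarkovLang φ L

/-- `S` is robustly Markov (as a semigroup) with respect to some alphabet. -/
def SgRobustlyMarkov (S : Type) [Semigroup S] : Prop :=
  ∃ (A : Type) (_ : Fintype A) (φ : A → S),
    (∀ s : S, ∃ w : List A, prodPlus φ w = some s) ∧
    ∃ L : Language A, IsRobustSgMarkovLang φ L

/-- `S` is strongly Markov (as a semigroup). -/
def SgStronglyMarkov (S : Type) [Semigroup S] : Prop :=
  ∀ (A : Type) [Fintype A] (φ : A → S),
    (∀ s : S, ∃ w : List A, prodPlus φ w = some s) →
    ∃ L : Language A, IsRobustSgMarkovLang φ L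

/-- `M` is Markov as a monoid. -/
def MonMarkov (M : Type) [Monoid M] : Prop :=
  ∃ (A : Type) (_ : Fintype A) (φ : A → M),
    Surjective (monProd φ) ∧ ∃ L : Language A, IsMonMarkovLang φ L

/-- `M` is robustly Markov (as a monoid) with respect to some alphabet. -/
def MonRobustlyMarkov (M : Type) [Monoid M] : Prop :=
  ∃ (A : Type) (_ : Fintype A) (φ : A → M),
    Surjective (monProd φ) ∧ ∃ L : Language A, IsRobustMonMarkovLang φ L

/-- `M` is strongly Markov (as a monoid). -/
def MonStronglyMarkov (M : Type) [Monoid M] : Prop :=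
  ∀ (A : Type) [Fintype A] (φ : A → M),
    Surjective (monProd φ) →
    ∃ L : Language A, IsRobustMonMarkovLang φ L


namespace Aux

theorem foldl_mul_assoc {S : Type} [Semigroup S] {A : Type} (φ : A → S) (w : List A) (x y : S) :
    w.foldl (fun s b => s * φ b) (x * y) = x * w.foldl (fun s b => s * φ b) y := by
  induction w generalizing y with
  | nil => rfl
  | cons a w ih => simp only [List.foldl_cons, mul_assoc, ih]

theorem prodPlus_cons {A S : Type} [Semigroup S] (φ : A → S) (a : A) (w : List A) :
    prodPlus φ (a :: w) = some (w.foldl (fun s b => s * φ b) (φ a)) := rfl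

theorem prodPlus_nil {A S : Type} [Semigroup S] (φ : A → S) : prodPlus φ ([] : List A) = none := rfl

theorem prodPlus_eq_none_iff {A S : Type} [Semigroup S] (φ : A → S) (w : List A) :
    prodPlus φ w = none ↔ w = [] := by
  cases w <;> simp [prodPlus]

theorem prodPlus_isSome {A S : Type} [Semigroup S] (φ : A → S) (w : List A) (h : w ≠ []) :
    ∃ s, prodPlus φ w = some s := by
  cases w with
  | nil => exact absurd rfl h
  | cons a w => exact ⟨_, rfl⟩

theorem prodPlus_append {A S : Type} [Semigroup S] (φ : A → S) {u v : List A} {s r : S}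
    (hu : prodPlus φ u = some s) (hv : prodPlus φ v = some r) :
    prodPlus φ (u ++ v) = some (s * r) := by
  cases u with
  | nil => simp [prodPlus] at hu
  | cons a u =>
    cases v with
    | nil => simp [prodPlus] at hv
    | cons b v =>
      simp only [prodPlus, Option.some.injEq] at hu hv ⊢
      subst hu; subst hv
      show some (List.foldl _ _ (u ++ b :: v)) = _
      rw [List.foldl_append, List.foldl_cons, foldl_mul_assoc]

theorem prodPlus_snoc {A S : Type} [Semigroup S] (φ : A → S) {u : List A} {s : S} (a : A)
    (hu : prodPlus φ u = some s) :
    prodPlus φ (u ++ [a]) = some (s * φ a) :=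
  prodPlus_append φ hu rfl

/-- `omul` : multiply an optional accumulated product by one more element. -/
def omul {S : Type} [Semigroup S] : Option S → S → S
  | none, t => t
  | some s, t => s * t

theorem prodPlus_snoc' {A S : Type} [Semigroup S] (φ : A → S) (u : List A) (a : A) :
    prodPlus φ (u ++ [a]) = some (omul (prodPlus φ u) (φ a)) := by
  cases hu : prodPlus φ u with
  | none => rw [(prodPlus_eq_none_iff φ u).mp hu]; rfl
  | some s => exact prodPlus_snoc φ a hu

theorem prodPlus_comp {A B S : Type} [Semigroup S] (φ : B → S) (g : A → B) (w : List A) :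
    prodPlus (fun c => φ (g c)) w = prodPlus φ (w.map g) := by
  cases w with
  | nil => rfl
  | cons a w => simp [prodPlus, List.foldl_map]

theorem foldl_pair {A S T : Type} [Semigroup S] [Semigroup T] (f : A → S) (g : A → T)
    (w : List A) (x : S) (y : T) :
    w.foldl (fun s b => s * ((fun c => (f c, g c)) b)) (x, y) =
      (w.foldl (fun s b => s * f b) x, w.foldl (fun s b => s * g b) y) := by
  induction w generalizing x y with
  | nil => rfl
  | cons a w ih => simpa [Prod.mul_def] using ih (x * f a) (y * g a)

theorem prodPlus_pair {A S T : Type} [Semigroup S] [Semigroup T] (f : A → S) (g : A → T)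
    (w : List A) :
    prodPlus (fun c => (f c, g c)) w = Option.map₂ Prod.mk (prodPlus f w) (prodPlus g w) := by
  cases w with
  | nil => rfl
  | cons a w =>
    simp only [prodPlus, Option.map₂, Option.bind_some, Option.map_some]
    rw [foldl_pair]

end Aux

namespace Aux

theorem finite_length_le (α : Type) [Finite α] (n : ℕ) : {l : List α | l.length ≤ n}.Finite := by
  induction n with
  | zero =>
    refine Set.Finite.subset (Set.finite_singleton []) ?_
    intro l hl; simpa using List.length_eq_zero_iff.mp (Nat.le_zero.mp hl)
  | succ n ih =>
    have : {l : List α | l.length ≤ n + 1} ⊆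
        insert [] (Set.image2 List.cons Set.univ {l : List α | l.length ≤ n}) := by
      intro l hl
      cases l with
      | nil => exact Set.mem_insert _ _
      | cons a l =>
        exact Set.mem_insert_of_mem _ (Set.mem_image2_of_mem (Set.mem_univ a)
          (by simpa using Nat.succ_le_succ_iff.mp hl))
    exact Set.Finite.subset ((Set.finite_univ.image2 _ ih).insert _) this

theorem finite_length_eq (α : Type) [Finite α] (n : ℕ) : {l : List α | l.length = n}.Finite :=
  (finite_length_le α n).subset fun l hl => le_of_eq hl

/-- Eventual periodicity of iterates of a map on a finite type. -/
theorem eventually_periodic {α : Type} [Finite α] (f : α → α) (x : α) :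
    ∃ N p : ℕ, 0 < N ∧ 0 < p ∧ ∀ n, N ≤ n → f^[n + p] x = f^[n] x := by
  have main : ∀ i j : ℕ, i < j → f^[i] x = f^[j] x →
      ∃ N p : ℕ, 0 < N ∧ 0 < p ∧ ∀ n, N ≤ n → f^[n + p] x = f^[n] x := by
    intro i j h hfij
    refine ⟨i + 1, j - i, Nat.succ_pos i, by omega, ?_⟩
    intro n hn
    obtain ⟨k, rfl⟩ : ∃ k, n = i + k := ⟨n - i, by omega⟩
    have h1 : i + k + (j - i) = k + j := by omega
    have h2 : i + k = k + i := by omega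
    rw [h1, h2, Function.iterate_add_apply, Function.iterate_add_apply, hfij]
  obtain ⟨i, j, hij, hfij⟩ := Finite.exists_ne_map_eq_of_infinite (fun n : ℕ => f^[n] x)
  rcases Nat.lt_or_ge i j with h | h
  · exact main i j h hfij
  · exact main j i (by omega) hfij.symm

end Aux

namespace Aux
variable {α : Type}

theorem exists_chunks (k : ℕ) (hk : 0 < k) : ∀ n, 0 < n → ∀ v : List α, n ≤ v.length →
    v.length ≤ k * n →
    ∃ c : List (List α), c.length = n ∧ (∀ x ∈ c, x ≠ [] ∧ x.length ≤ k) ∧ c.flatten = v := by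
  intro n
  induction n with
  | zero => omega
  | succ n ih =>
    intro _ v hlo hhi
    have hmul : k * (n + 1) = k * n + k := by ring
    have hnle : n ≤ k * n := Nat.le_mul_of_pos_left n hk
    rcases Nat.eq_zero_or_pos n with rfl | hn
    · refine ⟨[v], rfl, ?_, by simp⟩
      intro x hx
      simp only [List.mem_singleton] at hx
      subst hx
      refine ⟨fun h => by simp [h] at hlo, ?_⟩
      have := hhi; omega
    · set d := min k (v.length - n) with hd
      have hd1 : 1 ≤ d := by omega
      have hdk : d ≤ k := min_le_left _ _
      have hrest_lo : n ≤ (v.drop d).length := by simp only [List.length_drop]; omega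
      have hrest_hi : (v.drop d).length ≤ k * n := by simp only [List.length_drop]; omega
      obtain ⟨c, hc1, hc2, hc3⟩ := ih hn (v.drop d) hrest_lo hrest_hi
      refine ⟨v.take d :: c, by simp [hc1], ?_, by simp [hc3]⟩
      intro x hx
      rcases List.mem_cons.mp hx with rfl | hx
      · constructor
        · intro h
          have := congrArg List.length h
          simp only [List.length_take, List.length_nil] at this
          omega
        · simp only [List.length_take]; omega
      · exact hc2 x hx

def ocomp : Ordering → Ordering → Ordering
  | .eq, o => o
  | o, _ => o

@[simp] theorem ocomp_eq (o : Ordering) : ocomp .eq o = o := rfl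

theorem ocomp_ne_eq (o o' : Ordering) (h : o ≠ .eq) : ocomp o o' = o := by
  cases o <;> simp_all [ocomp]

theorem ocomp_eq_right (o : Ordering) : ocomp o .eq = o := by cases o <;> rfl

variable [LinearOrder α]

def myOrd : List α → List α → Ordering
  | a :: u, b :: v => ocomp (compare a b) (myOrd u v)
  | _, _ => .eq

@[simp] theorem myOrd_nil : myOrd ([] : List α) [] = .eq := rfl

theorem myOrd_cons (a b : α) (u v : List α) :
    myOrd (a :: u) (b :: v) = ocomp (compare a b) (myOrd u v) := rfl

theorem myOrd_self (u : List α) : myOrd u u = .eq := by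
  induction u with
  | nil => rfl
  | cons a u ih => simp [myOrd_cons, compare_eq_iff_eq.mpr rfl, ih]

theorem myOrd_eq_iff {u v : List α} (h : u.length = v.length) : myOrd u v = .eq ↔ u = v := by
  induction u generalizing v with
  | nil => cases v with
    | nil => simp
    | cons b v => simp at h
  | cons a u ih =>
    cases v with
    | nil => simp at h
    | cons b v =>
      simp only [List.length_cons, Nat.succ.injEq] at h
      rw [myOrd_cons]
      constructor
      · intro he
        rcases ho : compare a b with hlt | heq | hgt
        · rw [ocomp_ne_eq _ _ (by simp [ho])] at he; simp [ho] at he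
        · have hab : a = b := by
            have := ho; rwa [compare_eq_iff_eq] at this
          rw [ho, ocomp_eq] at he
          rw [hab, (ih h).mp he]
        · rw [ocomp_ne_eq _ _ (by simp [ho])] at he; simp [ho] at he
      · intro he
        injection he with h1 h2
        subst h1; subst h2
        rw [compare_eq_iff_eq.mpr rfl, ocomp_eq, (ih h).mpr rfl]

theorem myOrd_append {u v : List α} (x y : List α) (h : u.length = v.length) :
    myOrd (u ++ x) (v ++ y) = ocomp (myOrd u v) (myOrd x y) := by
  induction u generalizing v with
  | nil =>
    cases v with
    | nil => simp [myOrd_nil]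
    | cons b v => simp at h
  | cons a u ih =>
    cases v with
    | nil => simp at h
    | cons b v =>
      simp only [List.length_cons, Nat.succ.injEq] at h
      simp only [List.cons_append, myOrd_cons, ih h]
      cases compare a b <;> simp [ocomp]

theorem cmp_swap (a b : α) : (compare a b).swap = compare b a := by
  rcases lt_trichotomy a b with h | h | h
  · rw [compare_lt_iff_lt.mpr h, compare_gt_iff_gt.mpr h]; rfl
  · rw [compare_eq_iff_eq.mpr h, compare_eq_iff_eq.mpr h.symm]; rfl
  · rw [compare_gt_iff_gt.mpr h, compare_lt_iff_lt.mpr h]; rfl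

theorem ocomp_swap (o o' : Ordering) : (ocomp o o').swap = ocomp o.swap o'.swap := by
  cases o <;> cases o' <;> rfl

theorem myOrd_swap (u v : List α) : (myOrd u v).swap = myOrd v u := by
  induction u generalizing v with
  | nil => cases v <;> rfl
  | cons a u ih =>
    cases v with
    | nil => rfl
    | cons b v =>
      simp only [myOrd_cons]
      rw [ocomp_swap, cmp_swap, ih v]

theorem myOrd_lt_trans {u v w : List α} (h1 : u.length = v.length) (h2 : v.length = w.length)
    (huv : myOrd u v = .lt) (hvw : myOrd v w = .lt) : myOrd u w = .lt := by
  induction u generalizing v w with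
  | nil =>
    cases v <;> cases w <;> simp_all [myOrd]
  | cons a u ih =>
    cases v with
    | nil => simp at h1
    | cons b v =>
      cases w with
      | nil => simp at h2
      | cons c w =>
        simp only [List.length_cons, Nat.succ.injEq] at h1 h2
        simp only [myOrd_cons] at huv hvw ⊢
        have hab : a < b ∨ (a = b ∧ myOrd u v = .lt) := by
          rcases ho : compare a b with _ | _ | _
          · exact Or.inl (compare_lt_iff_lt.mp ho)
          · rw [ho, ocomp_eq] at huv; exact Or.inr ⟨compare_eq_iff_eq.mp ho, huv⟩
          · rw [ocomp_ne_eq _ _ (by simp [ho])] at huv; simp [ho] at huv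
        have hbc : b < c ∨ (b = c ∧ myOrd v w = .lt) := by
          rcases ho : compare b c with _ | _ | _
          · exact Or.inl (compare_lt_iff_lt.mp ho)
          · rw [ho, ocomp_eq] at hvw; exact Or.inr ⟨compare_eq_iff_eq.mp ho, hvw⟩
          · rw [ocomp_ne_eq _ _ (by simp [ho])] at hvw; simp [ho] at hvw
        rcases hab with h | ⟨rfl, h⟩
        · rcases hbc with h' | ⟨rfl, h'⟩
          · rw [compare_lt_iff_lt.mpr (lt_trans h h')]; rfl
          · rw [compare_lt_iff_lt.mpr h]; rfl
        · rcases hbc with h' | ⟨rfl, h'⟩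
          · rw [compare_lt_iff_lt.mpr h']; rfl
          · rw [compare_eq_iff_eq.mpr rfl, ocomp_eq]; exact ih h1 h2 h h'

theorem myOrd_lt_or_gt {u v : List α} (hlen : u.length = v.length) (hne : u ≠ v) :
    myOrd u v = .lt ∨ myOrd v u = .lt := by
  rcases ho : myOrd u v with _ | _ | _
  · exact Or.inl rfl
  · exact absurd ((myOrd_eq_iff hlen).mp ho) hne
  · right
    rw [← myOrd_swap, ho]; rfl

theorem myOrd_irrefl (u : List α) : myOrd u u ≠ .lt := by rw [myOrd_self]; simp

/-- existence of a minimal element of a finite nonempty set of equal-length lists. -/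
theorem exists_myOrd_min {F : Set (List α)} (hf : F.Finite) (hne : F.Nonempty) {n : ℕ}
    (hlen : ∀ u ∈ F, u.length = n) : ∃ v ∈ F, ∀ u ∈ F, myOrd u v ≠ .lt := by
  classical
  revert hne hlen
  refine Set.Finite.induction_on F hf (fun hne hlen => absurd hne (by simp)) ?_
  intro a s ha hs ih hne hlen
  rcases Set.eq_empty_or_nonempty s with rfl | hsne
  · refine ⟨a, Set.mem_insert _ _, ?_⟩
    intro u hu
    simp only [Set.mem_insert_iff, Set.mem_empty_iff_false, or_false] at hu
    subst hu
    exact myOrd_irrefl _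
  · obtain ⟨m, hm, hmin⟩ := ih hsne (fun u hu => hlen u (Set.mem_insert_of_mem _ hu))
    have hlm : m.length = n := hlen m (Set.mem_insert_of_mem _ hm)
    have hla : a.length = n := hlen a (Set.mem_insert _ _)
    by_cases hc : myOrd a m = .lt
    · refine ⟨a, Set.mem_insert _ _, ?_⟩
      intro u hu
      rcases Set.mem_insert_iff.mp hu with rfl | hu
      · exact myOrd_irrefl u
      · intro h
        have hlu : u.length = n := hlen u (Set.mem_insert_of_mem _ hu)
        exact hmin u hu (myOrd_lt_trans (by rw [hlu, hla]) (by rw [hla, hlm]) h hc)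
    · refine ⟨m, Set.mem_insert_of_mem _ hm, ?_⟩
      intro u hu
      rcases Set.mem_insert_iff.mp hu with rfl | hu
      · exact hc
      · exact hmin u hu

end Aux

namespace Aux
section Closure
variable {S : Type} [Semigroup S]

theorem foldl_mem_subsemigroup {A : Type} (φ : A → S) (U : Subsemigroup S) (w : List A)
    (x : S) (hx : x ∈ U) (hw : ∀ c ∈ w, φ c ∈ U) :
    w.foldl (fun s b => s * φ b) x ∈ U := by
  induction w generalizing x with
  | nil => exact hx
  | cons a w ih =>
    exact ih _ (U.mul_mem hx (hw a List.mem_cons_self)) fun c hc => hw c (List.mem_cons_of_mem a hc)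

theorem prodPlus_mem_subsemigroup {A : Type} (φ : A → S) (U : Subsemigroup S) {w : List A} {x : S}
    (hw : ∀ c ∈ w, φ c ∈ U) (h : prodPlus φ w = some x) : x ∈ U := by
  cases w with
  | nil => simp [prodPlus] at h
  | cons a w =>
    simp only [prodPlus, Option.some.injEq] at h
    subst h
    exact foldl_mem_subsemigroup φ U w _ (hw a List.mem_cons_self)
      fun c hc => hw c (List.mem_cons_of_mem a hc)

/-- Elements of the closure of `X` are exactly values of nonempty words over `X`. -/
theorem mem_closure_iff_word {X : Set S} {x : S} :
    x ∈ Subsemigroup.closure X ↔ ∃ w : List S, (∀ c ∈ w, c ∈ X) ∧ prodPlus id w = some x := by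
  constructor
  · intro hx
    induction hx using Subsemigroup.closure_induction with
    | mem y hy => exact ⟨[y], by simpa using hy, rfl⟩
    | mul y z _ _ hy hz =>
      obtain ⟨w1, hw1, hp1⟩ := hy
      obtain ⟨w2, hw2, hp2⟩ := hz
      refine ⟨w1 ++ w2, ?_, ?_⟩
      · intro c hc; rcases List.mem_append.mp hc with h | h
        · exact hw1 c h
        · exact hw2 c h
      · exact Aux.prodPlus_append id hp1 hp2
  · rintro ⟨w, hw, hp⟩
    exact prodPlus_mem_subsemigroup id (Subsemigroup.closure X)
      (fun c hc => Subsemigroup.subset_closure (hw c hc)) hp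

end Closure

section FinSg
variable (U : Type) [Semigroup U] [Finite U]

noncomputable def oneDFA : DFA U (Fin 3) where
  step q _ := if q.1 = 0 then 1 else 2
  start := 0
  accept := {1}

theorem oneDFA_evalFrom_two (w : List U) : (oneDFA U).evalFrom 2 w = 2 := by
  induction w with
  | nil => rfl
  | cons a w ih => simpa [DFA.evalFrom, oneDFA] using ih

theorem oneDFA_accepts : (oneDFA U).accepts = {w : List U | w.length = 1} := by
  ext w
  rw [DFA.mem_accepts]
  match w with
  | [] =>
    simp only [oneDFA, DFA.eval, DFA.evalFrom, List.foldl_nil]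
    constructor
    · intro h; exact absurd h (by decide)
    · intro h; exact absurd (Set.mem_setOf_eq ▸ h) (by simp)
  | [a] => simp [oneDFA, DFA.eval, DFA.evalFrom, Set.mem_setOf_eq]; rfl
  | a :: b :: l =>
    have : (oneDFA U).eval (a :: b :: l) = 2 := by
      show (oneDFA U).evalFrom _ _ = 2
      rw [DFA.evalFrom, List.foldl_cons, List.foldl_cons]
      exact oneDFA_evalFrom_two U l
    rw [this]
    constructor
    · intro h; exact absurd h (by simp [oneDFA])
    · intro h; exact absurd (Set.mem_setOf_eq ▸ h) (by simp)
end FinSg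

end Aux

namespace Aux

/-- The chunk alphabet: nonempty words over `T` of length at most `k`. -/
def SigA (T : Type) (k : ℕ) : Type := {l : List T // l ≠ [] ∧ l.length ≤ k}

instance SigA.finite (T : Type) [Finite T] (k : ℕ) : Finite (SigA T k) := by
  have h1 : {l : List T | l.length ≤ k}.Finite := finite_length_le T k
  have : Finite ({l : List T | l.length ≤ k} : Set (List T)) := h1
  refine Finite.of_injective (fun σ : SigA T k => (⟨σ.1, σ.2.2⟩ : {l : List T | l.length ≤ k})) ?_
  intro a b hab
  simp only [Subtype.mk.injEq] at hab
  exact Subtype.ext hab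

noncomputable instance SigA.linearOrder (T : Type) [Finite T] (k : ℕ) : LinearOrder (SigA T k) :=
  haveI : Fintype (SigA T k) := Fintype.ofFinite _
  LinearOrder.lift' (Fintype.equivFin (SigA T k)) (Equiv.injective _)

variable {T : Type} [Semigroup T] [Finite T] {k : ℕ}

noncomputable def tprod (σ : SigA T k) : T :=
  (prodPlus id σ.1).get (by
    obtain ⟨s, hs⟩ := prodPlus_isSome id σ.1 σ.2.1
    simp [hs])

theorem tprod_spec (σ : SigA T k) : prodPlus id σ.1 = some (tprod σ) := by
  simp [tprod]

theorem prodPlus_tprod_flatten (vS : List (SigA T k)) (h : vS ≠ []) :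
    prodPlus id ((vS.map Subtype.val).flatten : List T) = prodPlus tprod vS := by
  induction vS with
  | nil => exact absurd rfl h
  | cons x rest ih =>
    cases rest with
    | nil =>
      have h1 : (List.map Subtype.val [x]).flatten = x.1 := List.append_nil _
      show prodPlus id (x.1 ++ []) = _; rw [List.append_nil, tprod_spec x]
      rfl
    | cons y rest' =>
      have hne : (y :: rest') ≠ [] := by simp
      obtain ⟨r, hr⟩ := prodPlus_isSome tprod (y :: rest') hne
      have hflat : ((x :: y :: rest').map Subtype.val).flatten
          = x.1 ++ ((y :: rest').map Subtype.val).flatten := rfl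
      rw [hflat]
      rw [prodPlus_append id (tprod_spec x) (ih hne ▸ hr)]
      have : prodPlus tprod (x :: y :: rest') = some (tprod x * r) := by
        have : (x :: y :: rest') = [x] ++ (y :: rest') := rfl
        rw [this, prodPlus_append tprod (by rfl : prodPlus tprod [x] = some (tprod x)) hr]
      rw [this]

/-- the set of lengths of words over `T` multiplying to `t`. -/
def Dset (T : Type) [Semigroup T] (t : T) : Set ℕ :=
  { m | ∃ v : List T, v.length = m ∧ prodPlus id v = some t }

def Pset (T : Type) [Semigroup T] (m : ℕ) : Set T := { t | m ∈ Dset T t }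

def PF (T : Type) [Semigroup T] : Set T → Set T := fun X => { z | ∃ x ∈ X, ∃ y : T, x * y = z }

theorem Pset_succ (m : ℕ) (hm : 1 ≤ m) : Pset T (m + 1) = PF T (Pset T m) := by
  ext t
  constructor
  · rintro ⟨v, hlen, hprod⟩
    rcases List.eq_nil_or_concat v with rfl | ⟨u, y, rfl⟩
    · simp at hlen
    · rw [List.concat_eq_append] at hlen hprod
      have hulen : u.length = m := by
        rw [List.length_append] at hlen; simpa using hlen
      have hune : u ≠ [] := by intro h; rw [h] at hulen; simp at hulen; omega
      obtain ⟨x, hx⟩ := prodPlus_isSome id u hune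
      rw [prodPlus_snoc id y hx] at hprod
      exact ⟨x, ⟨u, hulen, hx⟩, y, by simpa using hprod⟩
  · rintro ⟨x, ⟨u, hulen, hx⟩, y, hxy⟩
    exact ⟨u ++ [y], by simp [hulen], by rw [prodPlus_snoc id y hx]; simp [hxy]⟩

theorem Pset_iterate : ∀ m, 1 ≤ m → Pset T m = (PF T)^[m - 1] (Pset T 1) := by
  intro m
  induction m with
  | zero => omega
  | succ m ih =>
    intro _
    rcases Nat.eq_zero_or_pos m with rfl | hm
    · simp
    · rw [Pset_succ m hm, ih hm]
      have : m + 1 - 1 = (m - 1) + 1 := by omega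
      rw [this, Function.iterate_succ_apply' (PF T)]

theorem Pset_periodic :
    ∃ N p : ℕ, 1 ≤ N ∧ 1 ≤ p ∧ ∀ m, N ≤ m → Pset T (m + p) = Pset T m := by
  obtain ⟨N, p, hN, hp, hper⟩ := eventually_periodic (PF T) (Pset T 1)
  refine ⟨N + 1, p, by omega, hp, ?_⟩
  intro m hm
  rw [Pset_iterate m (by omega), Pset_iterate (m + p) (by omega)]
  have h1 : m + p - 1 = (m - 1) + p := by omega
  rw [h1]
  exact hper (m - 1) (by omega)

theorem Dset_window {N p : ℕ} (hN : 1 ≤ N) (hp : 1 ≤ p)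
    (hper : ∀ m, N ≤ m → Pset T (m + p) = Pset T m) (t : T)
    (hub : ∀ b : ℕ, ∃ m ∈ Dset T t, b < m) :
    ∀ x, N ≤ x → ∃ m ∈ Dset T t, x ≤ m ∧ m < x + p := by
  intro x hx
  obtain ⟨m0, hm0D, hm0⟩ := hub x
  have key : ∀ m1, x ≤ m1 → m1 ∈ Dset T t → ∃ m ∈ Dset T t, x ≤ m ∧ m < x + p := by
    intro m1
    induction m1 using Nat.strong_induction_on with
    | _ m1 ih =>
      intro hxm hmD
      by_cases hcase : m1 < x + p
      · exact ⟨m1, hmD, hxm, hcase⟩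
      · have hm1D' : (m1 - p) ∈ Dset T t := by
          have h2 : N ≤ m1 - p := by omega
          have hmem : t ∈ Pset T ((m1 - p) + p) := by
            show ((m1 - p) + p) ∈ Dset T t
            have he : (m1 - p) + p = m1 := by omega
            rw [he]; exact hmD
          rwa [hper (m1 - p) h2] at hmem
        exact ih (m1 - p) (by omega) (by omega) hm1D'
  exact key m0 (by omega) hm0D

theorem Dset_good_length {N p : ℕ} (hN : 1 ≤ N) (hp : 1 ≤ p)
    (hper : ∀ m, N ≤ m → Pset T (m + p) = Pset T m) (t : T)
    (hub : ∀ b : ℕ, ∃ m ∈ Dset T t, b < m) :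
    ∀ n, 1 ≤ n → ∃ m ∈ Dset T t, n ≤ m ∧ m ≤ (N + p) * n := by
  intro n hn
  rcases Nat.le_total n N with h | h
  · obtain ⟨m, hmD, hm1, hm2⟩ := Dset_window hN hp hper t hub N le_rfl
    refine ⟨m, hmD, by omega, ?_⟩
    have : N + p ≤ (N + p) * n := Nat.le_mul_of_pos_right _ hn
    omega
  · obtain ⟨m, hmD, hm1, hm2⟩ := Dset_window hN hp hper t hub n h
    refine ⟨m, hmD, hm1, ?_⟩
    have : (N + p) * n = N * n + p * n := by ring
    have h1 : n ≤ N * n := Nat.le_mul_of_pos_left _ (by omega)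
    have h2 : p ≤ p * n := Nat.le_mul_of_pos_right _ (by omega)
    omega

end Aux

namespace Aux

section Comb
variable {A Q T : Type} [Semigroup T] [Finite T] {k : ℕ}

/-- the combined DFA checking the `A`-projection against `M` and canonicity of the
`SigA`-projection. -/
noncomputable def combDFA (M : DFA A Q) (T : Type) [Semigroup T] [Finite T] (k : ℕ) :
    DFA (A × SigA T k) (Q × (Set (Option T × Ordering) × Option T)) where
  step st c := (M.step st.1 c.1,
    { z | ∃ x o σ', (x, o) ∈ st.2.1 ∧
        z = (some (omul x (tprod σ')), ocomp o (compare σ' c.2)) },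
    some (omul st.2.2 (tprod c.2)))
  start := (M.start, {(none, .eq)}, none)
  accept := { st | st.1 ∈ M.accept ∧ (st.2.2, Ordering.lt) ∉ st.2.1 }

theorem combDFA_evalFrom (M : DFA A Q) (w : List (A × SigA T k)) :
    (combDFA M T k).evalFrom (combDFA M T k).start w =
      (M.evalFrom M.start (w.map Prod.fst),
       { z | ∃ v' : List (SigA T k), v'.length = w.length ∧
          z = (prodPlus tprod v', myOrd v' (w.map Prod.snd)) },
       prodPlus tprod (w.map Prod.snd)) := by
  induction w using List.reverseRecOn with
  | nil =>
    refine Prod.ext rfl (Prod.ext ?_ rfl)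
    show ({(none, .eq)} : Set (Option T × Ordering)) = _
    ext z
    simp only [Set.mem_singleton_iff, Set.mem_setOf_eq, List.map_nil, List.length_nil]
    constructor
    · rintro rfl; exact ⟨[], rfl, rfl⟩
    · rintro ⟨v', hv', rfl⟩
      rw [List.length_eq_zero_iff.mp hv']
      rfl
  | append_singleton w c ih =>
    rw [DFA.evalFrom_append_singleton, ih]
    simp only [List.map_append, List.map_cons, List.map_nil]
    rw [DFA.evalFrom_append_singleton, prodPlus_snoc' tprod]
    refine Prod.ext rfl (Prod.ext ?_ rfl)
    show {z | ∃ x o σ', _ ∧ _} = _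
    ext z
    simp only [Set.mem_setOf_eq, List.length_append, List.length_cons, List.length_nil]
    constructor
    · rintro ⟨x, o, σ', ⟨v', hlen, heq⟩, rfl⟩
      injection heq with h1 h2
      refine ⟨v' ++ [σ'], by simp [hlen], ?_⟩
      rw [prodPlus_snoc' tprod v' σ', myOrd_append [σ'] [c.2] (by simp [hlen]),
        myOrd_cons, myOrd_nil, ocomp_eq_right, h1, h2]
    · rintro ⟨v'', hlen, rfl⟩
      rcases List.eq_nil_or_concat v'' with rfl | ⟨v', σ', rfl⟩
      · simp at hlen
      · rw [List.concat_eq_append] at hlen ⊢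
        have hl : v'.length = w.length := by simpa using hlen
        refine ⟨prodPlus tprod v', myOrd v' (w.map Prod.snd), σ', ⟨v', hl, rfl⟩, ?_⟩
        rw [prodPlus_snoc' tprod v' σ', myOrd_append [σ'] [c.2] (by simp [hl]),
          myOrd_cons, myOrd_nil, ocomp_eq_right]

/-- canonicity of a `SigA`-word. -/
def Good (u : List (SigA T k)) : Prop :=
  ¬ ∃ v' : List (SigA T k), v'.length = u.length ∧
      prodPlus tprod v' = prodPlus tprod u ∧ myOrd v' u = .lt

theorem combDFA_accepts (M : DFA A Q) :
    (combDFA M T k).accepts =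
      { w : List (A × SigA T k) | w.map Prod.fst ∈ M.accepts ∧ Good (w.map Prod.snd) } := by
  ext w
  rw [DFA.mem_accepts]
  show (combDFA M T k).evalFrom (combDFA M T k).start w ∈ _ ↔ _
  rw [combDFA_evalFrom]
  show M.evalFrom M.start (w.map Prod.fst) ∈ M.accept ∧ _ ∉ _ ↔ _
  rw [Set.mem_setOf_eq]
  constructor
  · rintro ⟨h1, h2⟩
    refine ⟨DFA.mem_accepts M |>.mpr h1, ?_⟩
    rintro ⟨v', hlen, hprod, hord⟩
    exact h2 ⟨v', by simpa using hlen, by rw [hprod, hord]⟩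
  · rintro ⟨h1, h2⟩
    refine ⟨DFA.mem_accepts M |>.mp h1, ?_⟩
    rintro ⟨v', hlen, heq⟩
    injection heq with ha hb
    exact h2 ⟨v', by simpa using hlen, ha.symm, hb.symm⟩

end Comb
end Aux

namespace Aux

theorem eq_of_map_eq {α β : Type} : ∀ {w w' : List (α × β)},
    w.map Prod.fst = w'.map Prod.fst → w.map Prod.snd = w'.map Prod.snd → w = w'
  | [], [], _, _ => rfl
  | [], (c' :: w'), h1, _ => by simp at h1
  | (c :: w), [], h1, _ => by simp at h1
  | (c :: w), (c' :: w'), h1, h2 => by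
    simp only [List.map_cons, List.cons.injEq] at h1 h2
    rw [eq_of_map_eq h1.2 h2.2, Prod.ext h1.1 h2.1]

theorem Good_append_left {T : Type} [Semigroup T] [Finite T] {k : ℕ}
    {u y : List (SigA T k)} (hu : u ≠ []) (hy : y ≠ [])
    (h : Good (u ++ y)) : Good u := by
  rintro ⟨v', h1, h2, h3⟩
  obtain ⟨pu, hpu⟩ := prodPlus_isSome tprod u hu
  obtain ⟨py, hpy⟩ := prodPlus_isSome tprod y hy
  refine h ⟨v' ++ y, by simp [h1], ?_, ?_⟩
  · have hv'p : prodPlus tprod v' = some pu := by rw [h2, hpu]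
    rw [prodPlus_append tprod hv'p hpy, prodPlus_append tprod hpu hpy]
  · rw [myOrd_append y y h1, h3, myOrd_self]
    rfl

theorem Dset_unbounded {S T : Type} [Semigroup S] [Semigroup T] [Finite T] [Infinite S]
    (X : Finset (S × T)) (hfg : Subsemigroup.closure (X : Set (S × T)) = ⊤) (t : T) (b : ℕ) :
    ∃ m ∈ Dset T t, b < m := by
  classical
  have hXs : (↑X : Set (S × T)).Finite := X.finite_toSet
  haveI : Finite ↥(↑X : Set (S × T)) := hXs
  set W : Set (List (S × T)) := {l | l.length ≤ b ∧ ∀ c ∈ l, c ∈ (↑X : Set (S × T))} with hW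
  have hWfin : W.Finite := by
    have himg : W ⊆ (List.map (Subtype.val : ↥(↑X : Set (S × T)) → S × T)) ''
        {l | l.length ≤ b} := by
      rintro l ⟨hl1, hl2⟩
      refine ⟨l.pmap (fun c hc => ⟨c, hc⟩) hl2, by simpa using hl1, ?_⟩
      rw [List.map_pmap]
      exact List.pmap_eq_map (l := l) hl2 ▸ (by simp)
    exact ((finite_length_le _ b).image _).subset himg
  set SV : Set (S × T) := {x | ∃ w ∈ W, prodPlus id w = some x} with hSVdef
  have hSV : SV.Finite := by
    have hsub : SV ⊆ Option.some ⁻¹' ((prodPlus id) '' W) := by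
      rintro x ⟨w, hw, hwp⟩
      exact ⟨w, hw, hwp⟩
    refine (Set.Finite.preimage ?_ (hWfin.image _)).subset hsub
    exact Set.injOn_of_injective (fun a b hab => Option.some.inj hab)
  obtain ⟨s, hs⟩ := (hSV.image Prod.fst).infinite_compl.nonempty
  have hmem : (s, t) ∈ Subsemigroup.closure (↑X : Set (S × T)) := by
    rw [hfg]; trivial
  obtain ⟨w, hwX, hwprod⟩ := mem_closure_iff_word.mp hmem
  have hlen : b < w.length := by
    by_contra hb
    push_neg at hb
    exact hs ⟨(s, t), ⟨w, ⟨hb, hwX⟩, hwprod⟩, rfl⟩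
  refine ⟨w.length, ?_, hlen⟩
  have hpair : prodPlus (fun c : S × T => (Prod.fst c, Prod.snd c)) w
      = Option.map₂ Prod.mk (prodPlus Prod.fst w) (prodPlus Prod.snd w) :=
    prodPlus_pair Prod.fst Prod.snd w
  have hid : (fun c : S × T => (Prod.fst c, Prod.snd c)) = (id : S × T → S × T) := by
    funext c; rfl
  rw [hid, hwprod] at hpair
  have h2 : prodPlus Prod.snd w = some t := by
    cases h1 : prodPlus (Prod.fst : S × T → S) w with
    | none => rw [h1] at hpair; simp [Option.map₂] at hpair
    | some s' =>
      cases h2 : prodPlus (Prod.snd : S × T → T) w with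
      | none => rw [h1, h2] at hpair; simp [Option.map₂] at hpair
      | some t' =>
        rw [h1, h2] at hpair
        simp only [Option.map₂, Option.bind_some, Option.map_some, Option.some.injEq,
          Prod.mk.injEq] at hpair
        rw [hpair.2]
  refine ⟨w.map Prod.snd, List.length_map (as := w) Prod.snd, ?_⟩
  rw [← h2]
  exact (prodPlus_comp id Prod.snd w).symm

end Aux

namespace Aux

instance : Fintype Ordering :=
  ⟨{Ordering.lt, Ordering.eq, Ordering.gt}, by intro x; cases x <;> decide⟩

instance optionFinite {α : Type} [Finite α] : Finite (Option α) := by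
  haveI := Fintype.ofFinite α; infer_instance

theorem sgMarkov_of_finite (U : Type) [Semigroup U] [Finite U] : SgMarkov U := by
  haveI : Fintype U := Fintype.ofFinite U
  refine ⟨U, inferInstance, id, fun s => ⟨[s], rfl⟩, {w : List U | w.length = 1}, ?_, ?_, ?_, ?_⟩
  · exact ⟨Fin 3, inferInstance, oneDFA U, oneDFA_accepts U⟩
  · exact fun h => Nat.zero_ne_one h
  · intro u v hu hv h
    have h1 : 0 < u.length := List.length_pos_iff.mpr hu
    have h2 : 0 < v.length := List.length_pos_iff.mpr hv
    have h3 : (u ++ v).length = 1 := h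
    rw [List.length_append] at h3
    omega
  · intro s
    refine ⟨[s], ⟨rfl, rfl⟩, ?_⟩
    rintro w ⟨hw, hp⟩
    obtain ⟨a, rfl⟩ := List.length_eq_one_iff.mp hw
    have : a = s := Option.some.inj hp
    rw [this]

theorem backward_infinite {S T : Type} [Semigroup S] [Semigroup T] [Finite T] [Infinite S]
    [Nonempty T] (hS : SgMarkov S) (X : Finset (S × T))
    (hfg : Subsemigroup.closure (X : Set (S × T)) = ⊤) : SgMarkov (S × T) := by
  classical
  obtain ⟨A, hA, φ, hsurjA, L, hL⟩ := hS
  obtain ⟨N, p, hN, hp, hper⟩ := Pset_periodic (T := T)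
  set k := N + p with hkdef
  have hk1 : 0 < k := by omega
  haveI : Fintype (SigA T k) := Fintype.ofFinite _
  obtain ⟨Q, hQ, M, hM⟩ := hL.regular
  set ψ : A × SigA T k → S × T := fun c => (φ c.1, tprod c.2) with hψdef
  set K : Language (A × SigA T k) :=
    { w | (w.map Prod.fst) ∈ L ∧ Good (w.map Prod.snd) } with hKdef
  have hub : ∀ t : T, ∀ b : ℕ, ∃ m ∈ Dset T t, b < m := fun t b => Dset_unbounded X hfg t b
  -- the pair formula
  have hps : ∀ w : List (A × SigA T k), prodPlus ψ w =
      Option.map₂ Prod.mk (prodPlus φ (w.map Prod.fst)) (prodPlus tprod (w.map Prod.snd)) := by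
    intro w
    rw [← prodPlus_comp φ Prod.fst w, ← prodPlus_comp tprod Prod.snd w]
    exact prodPlus_pair _ _ w
  -- existence and uniqueness of representatives
  have hrep : ∀ x : S × T, ∃ w, (w ∈ K ∧ prodPlus ψ w = some x) ∧
      ∀ w', (w' ∈ K ∧ prodPlus ψ w' = some x) → w' = w := by
    rintro ⟨s, t⟩
    obtain ⟨us, ⟨husL, husP⟩, huniq⟩ := hL.unique_rep s
    have husne : us ≠ [] := by
      intro h; rw [h] at husP; simp [prodPlus] at husP
    have hn1 : 1 ≤ us.length := List.length_pos_iff.mpr husne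
    obtain ⟨m, hmD, hm1, hm2⟩ := Dset_good_length (by omega) hp hper t (hub t) us.length hn1
    obtain ⟨vT, hvTlen, hvTprod⟩ := hmD
    obtain ⟨chunks, hclen, hcprop, hcflat⟩ :=
      exists_chunks k hk1 us.length hn1 vT (by omega) (by rw [hkdef]; omega)
    set vS : List (SigA T k) := chunks.pmap (fun x hx => (⟨x, hx⟩ : SigA T k)) hcprop with hvS
    have hvSlen : vS.length = us.length := List.length_pmap.trans hclen
    have hvSval : vS.map Subtype.val = chunks := by
      exact (List.map_pmap hcprop).trans ((List.pmap_eq_map (f := id) hcprop).trans (List.map_id chunks))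
    have hvSne : vS ≠ [] := by
      intro h; rw [h] at hvSlen; simp at hvSlen; omega
    have hvSprod : prodPlus tprod vS = some t := by
      rw [← prodPlus_tprod_flatten vS hvSne, hvSval, hcflat, hvTprod]
    set Cand : Set (List (SigA T k)) :=
      { v | v.length = us.length ∧ prodPlus tprod v = some t } with hCand
    have hCf : Cand.Finite := (finite_length_eq (SigA T k) us.length).subset fun v hv => hv.1
    obtain ⟨vm, hvmC, hvmmin⟩ := exists_myOrd_min hCf ⟨vS, hvSlen, hvSprod⟩ fun u hu => hu.1
    have hGoodvm : Good vm := by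
      rintro ⟨v', h1, h2, h3⟩
      exact hvmmin v' ⟨h1.trans hvmC.1, h2.trans hvmC.2⟩ h3
    set w := us.zip vm with hw
    have hmf : w.map Prod.fst = us := List.map_fst_zip (l₁ := us) (l₂ := vm) (le_of_eq hvmC.1.symm)
    have hms : w.map Prod.snd = vm := List.map_snd_zip (l₁ := us) (l₂ := vm) (le_of_eq hvmC.1)
    refine ⟨w, ⟨⟨by rw [hmf]; exact husL, by rw [hms]; exact hGoodvm⟩, ?_⟩, ?_⟩
    · rw [hps w, hmf, hms, husP, hvmC.2]
      rfl
    · rintro w' ⟨⟨hw'L, hw'G⟩, hw'P⟩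
      rw [hps w'] at hw'P
      have hsome : prodPlus φ (w'.map Prod.fst) = some s ∧
          prodPlus tprod (w'.map Prod.snd) = some t := by
        cases h1 : prodPlus φ (w'.map Prod.fst) with
        | none => rw [h1] at hw'P; simp [Option.map₂] at hw'P
        | some s' =>
          cases h2 : prodPlus tprod (w'.map Prod.snd) with
          | none => rw [h1, h2] at hw'P; simp [Option.map₂] at hw'P
          | some t' =>
            rw [h1, h2] at hw'P
            simp only [Option.map₂, Option.bind_some, Option.map_some, Option.some.injEq,
              Prod.mk.injEq] at hw'P
            exact ⟨by rw [hw'P.1], by rw [hw'P.2]⟩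
      have hfst : w'.map Prod.fst = us := huniq _ ⟨hw'L, hsome.1⟩
      have hlenw' : (w'.map Prod.snd).length = us.length := by
        rw [List.length_map, ← List.length_map (as := w') Prod.fst, hfst]
      have hsndC : (w'.map Prod.snd) ∈ Cand := ⟨hlenw', hsome.2⟩
      have hsnd : w'.map Prod.snd = vm := by
        by_contra hne
        rcases myOrd_lt_or_gt (by rw [hlenw', hvmC.1]) hne with hlt | hlt
        · exact hvmmin _ hsndC hlt
        · exact hw'G ⟨vm, by rw [hvmC.1, hlenw'], by rw [hvmC.2, hsome.2], hlt⟩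
      exact eq_of_map_eq (by rw [hfst, hmf]) (by rw [hsnd, hms])
  haveI : Fintype Q := hQ
  refine ⟨A × SigA T k, inferInstance, ψ, fun x => (hrep x).elim fun w hw => ⟨w, hw.1.2⟩,
    K, ?_, ?_, ?_, ?_⟩
  · refine ⟨Q × (Set (Option T × Ordering) × Option T), Fintype.ofFinite _, combDFA M T k, ?_⟩
    rw [combDFA_accepts, hM]
  · rintro ⟨h, -⟩
    exact hL.not_empty_mem h
  · rintro u v hu hv ⟨hL1, hG1⟩
    rw [List.map_append] at hL1 hG1
    constructor
    · exact hL.plus_prefix_closed _ _ (by simpa using hu) (by simpa using hv) hL1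
    · exact Good_append_left (by simpa using hu) (by simpa using hv) hG1
  · intro x
    obtain ⟨w, hw, huniq⟩ := hrep x
    exact ⟨w, hw, huniq⟩

end Aux

/-- If `S` is a Markov semigroup and `T` is a finite semigroup, then `S × T` is Markov
iff it is finitely generated as a semigroup. -/
theorem stmt18 {S T : Type} [Semigroup S] [Semigroup T] [Finite T]
    (hS : SgMarkov S) :
    SgMarkov (S × T) ↔
      ∃ X : Finset (S × T), Subsemigroup.closure (X : Set (S × T)) = ⊤ := by
  constructor
  · rintro ⟨A, hA, φP, hsurj, -⟩
    classical
    refine ⟨(Set.finite_range φP).toFinset, ?_⟩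
    rw [eq_top_iff]
    rintro x -
    obtain ⟨w, hw⟩ := hsurj x
    rw [Set.Finite.coe_toFinset]
    apply Aux.mem_closure_iff_word.mpr
    refine ⟨w.map φP, fun c hc => ?_, ?_⟩
    · obtain ⟨a, _, rfl⟩ := List.mem_map.mp hc
      exact ⟨a, rfl⟩
    · rw [← Aux.prodPlus_comp id φP w]
      exact hw
  · rintro ⟨X, hfg⟩
    rcases finite_or_infinite S with hfin | hinf
    · exact Aux.sgMarkov_of_finite (S × T)
    · rcases isEmpty_or_nonempty T with hT | hT
      · haveI : IsEmpty (S × T) := ⟨fun x => hT.false x.2⟩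
        haveI : Finite (S × T) := inferInstance
        exact Aux.sgMarkov_of_finite (S × T)
      · exact Aux.backward_infinite hS X hfg
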